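/- Let N ≥ 2, let a₁,…,a_{N−1} ∈ ℝ, let l ∈ ℂ, and set 𝒥 = 𝒥(a) and 𝒥_l = 𝒥 + l·I_{1×1}. Then for every z ∈ ℂ, det(zI − 𝒥_l) + (−1)^N det(−zI − 𝒥_l) = 2·det(zI − 𝒥). In particular, when N = 2m, l > 0 and the eigenvalues of 𝒥 are ±λ₁,…,±λ_m while those of 𝒥_l are z₁,…,z_{2m}, this reads ∏_{j=1}^m (z² − λ_j²) = (1/2)∏_{k=1}^{2m} (z − z_k) + (1/2)∏_{k=1}^{2m} (z + z_k); and when N = 2n+1 with eigenvalues 0, ±λ₁,…,±λ_n of 𝒥 and z₁,…,z_{2n+1} of 𝒥_l, it reads z·∏_{k=1}^n (z² − λ_k²) = (1/2)∏_{k=1}^{2n+1} (z − z_k) + (1/2)∏_{k=1}^{2n+1} (z + z_k). -/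

import Mathlib

open MeasureTheory Matrix Polynomial Finset

/-- The `N × N` zero-diagonal Jacobi matrix with off-diagonal entries `a 0, a 1, ...`
(`a k` sits in entries `(k, k+1)` and `(k+1, k)`, i.e. `a (j-1)` is the paper's `a_j`). -/
noncomputable def jacobiM (N : ℕ) (a : ℕ → ℝ) : Matrix (Fin N) (Fin N) ℝ :=
  Matrix.of fun i j =>
    if (i : ℕ) + 1 = (j : ℕ) then a i else if (j : ℕ) + 1 = (i : ℕ) then a j else 0

/-- The matrix with `1` in the `(1,1)` entry (index `0`) and zeros elsewhere, i.e. `e₁e₁ᵀ`. -/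
noncomputable def E11K (N : ℕ) (K : Type*) [Zero K] [One K] : Matrix (Fin N) (Fin N) K :=
  Matrix.of fun i j => if (i : ℕ) = 0 ∧ (j : ℕ) = 0 then 1 else 0

/-- `z₁ > -z₂ > z₃ > ⋯ > (-1)^(N-1) z_N > 0`: the sequence `(-1)^(j-1) z_j` is strictly
decreasing and positive. -/
def AltOrdered (N : ℕ) (z : Fin N → ℝ) : Prop :=
  StrictAnti (fun j : Fin N => (-1 : ℝ) ^ (j : ℕ) * z j) ∧
  ∀ h : 0 < N, 0 < (-1 : ℝ) ^ (N - 1) * z ⟨N - 1, Nat.sub_lt h Nat.one_pos⟩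

section Aux

variable {N : ℕ}

/-- Evaluation of the characteristic polynomial. -/
lemma eval_charpoly_aux (M : Matrix (Fin N) (Fin N) ℂ) (z : ℂ) :
    M.charpoly.eval z = (z • (1 : Matrix (Fin N) (Fin N) ℂ) - M).det := by
  rw [Matrix.charpoly, eval_det, matPolyEquiv_charmatrix, eval_sub, eval_X, eval_C,
    Matrix.scalar_apply, ← Matrix.smul_one_eq_diagonal]

lemma det_add_smul_E11 [NeZero N] (M : Matrix (Fin N) (Fin N) ℂ) (c : ℂ) :
    (M + c • E11K N ℂ).det
      = M.det + c * (M.updateRow 0 ((Pi.single (0 : Fin N) (1 : ℂ) : Fin N → ℂ))).det := by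
  have h : M + c • E11K N ℂ
      = M.updateRow 0 (M 0 + c • ((Pi.single (0 : Fin N) (1 : ℂ) : Fin N → ℂ))) := by
    ext i j
    by_cases hi : i = 0
    · subst hi
      by_cases hj : j = 0
      · subst hj; simp [E11K, Pi.single_apply]
      · have hj' : (j : ℕ) ≠ 0 := fun h => hj (Fin.ext h)
        simp [E11K, hj', Pi.single_apply, hj]
    · have hi' : (i : ℕ) ≠ 0 := fun h => hi (Fin.ext h)
      simp [E11K, hi', hi, Matrix.updateRow_ne hi]
  rw [h, Matrix.det_updateRow_add, Matrix.det_updateRow_smul, Matrix.updateRow_eq_self]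

/-- The sign diagonal matrix. -/
noncomputable def signD (N : ℕ) : Matrix (Fin N) (Fin N) ℂ :=
  Matrix.diagonal fun i : Fin N => (-1 : ℂ) ^ (i : ℕ)

lemma signD_mul_signD : signD N * signD N = 1 := by
  rw [signD, Matrix.diagonal_mul_diagonal]
  convert Matrix.diagonal_one with i
  rw [← mul_pow]; simp

lemma det_signD_conj (M : Matrix (Fin N) (Fin N) ℂ) :
    (signD N * M * signD N).det = M.det := by
  rw [Matrix.det_mul, Matrix.det_mul]
  have h : (signD N).det * (signD N).det = 1 := by
    rw [← Matrix.det_mul, signD_mul_signD, Matrix.det_one]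
  calc (signD N).det * M.det * (signD N).det
      = M.det * ((signD N).det * (signD N).det) := by ring
    _ = M.det := by rw [h, mul_one]

lemma signD_conj_jacobi (a : ℕ → ℝ) :
    signD N * (jacobiM N a).map (algebraMap ℝ ℂ) * signD N
      = -((jacobiM N a).map (algebraMap ℝ ℂ)) := by
  ext i j
  rw [signD, Matrix.mul_diagonal, Matrix.diagonal_mul]
  simp only [jacobiM, Matrix.map_apply, Matrix.of_apply, Matrix.neg_apply]
  have hx : ∀ k : ℕ, ((-1 : ℂ) ^ k) * ((-1 : ℂ) ^ k) = 1 := by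
    intro k; rw [← mul_pow]; simp
  split_ifs with h1 h2
  · rw [← h1, pow_succ]
    linear_combination (-(algebraMap ℝ ℂ (a i))) * hx (i : ℕ)
  · rw [← h2, pow_succ]
    linear_combination (-(algebraMap ℝ ℂ (a j))) * hx (j : ℕ)
  · simp

lemma signD_conj_E11 : signD N * E11K N ℂ * signD N = E11K N ℂ := by
  ext i j
  rw [signD, Matrix.mul_diagonal, Matrix.diagonal_mul]
  simp only [E11K, Matrix.of_apply]
  split_ifs with h
  · rw [h.1, h.2]; norm_num
  · ring

lemma signD_conj_smul_one (z : ℂ) :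
    signD N * (z • (1 : Matrix (Fin N) (Fin N) ℂ)) * signD N
      = z • (1 : Matrix (Fin N) (Fin N) ℂ) := by
  rw [Matrix.mul_smul, Matrix.smul_mul, mul_one, signD_mul_signD]

end Aux

/-- for the rank-one perturbation `𝒥_l = 𝒥(a) + l·I₁ₓ₁` (with `l ∈ ℂ`),
`det(zI - 𝒥_l) + (-1)^N det(-zI - 𝒥_l) = 2 det(zI - 𝒥)` for all `z ∈ ℂ`.  In particular,
if `N = 2m`, `l > 0`, the eigenvalues of `𝒥` are `±λ₁,…,±λ_m` and those of `𝒥_l` are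
`z₁,…,z_{2m}`, then `∏ (z² - λ_j²) = ½∏(z - z_k) + ½∏(z + z_k)`; and if `N = 2n+1` with
eigenvalues `0, ±λ₁,…,±λ_n` of `𝒥` and `z₁,…,z_{2n+1}` of `𝒥_l`, then
`z·∏(z² - λ_k²) = ½∏(z - z_k) + ½∏(z + z_k)`. -/
theorem charpoly_symmetrization_identity (N : ℕ) (hN : 2 ≤ N) (a : ℕ → ℝ) (l : ℂ)
    (Jc : Matrix (Fin N) (Fin N) ℂ) (hJc : Jc = (jacobiM N a).map (algebraMap ℝ ℂ))
    (Ml : Matrix (Fin N) (Fin N) ℂ) (hMl : Ml = Jc + l • E11K N ℂ) :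
    (∀ z : ℂ,
      (z • (1 : Matrix (Fin N) (Fin N) ℂ) - Ml).det
        + (-1 : ℂ) ^ N * ((-z) • (1 : Matrix (Fin N) (Fin N) ℂ) - Ml).det
      = 2 * (z • (1 : Matrix (Fin N) (Fin N) ℂ) - Jc).det) ∧
    (∀ (m : ℕ), N = 2 * m → ∀ (lr : ℝ), 0 < lr → l = (lr : ℂ) →
      ∀ (lam : Fin m → ℝ) (zs : Fin (2 * m) → ℂ),
        Jc.charpoly = ∏ j : Fin m, ((X - C (lam j : ℂ)) * (X + C (lam j : ℂ))) →
        Ml.charpoly = ∏ k : Fin (2 * m), (X - C (zs k)) →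
        ∀ z : ℂ, ∏ j : Fin m, (z ^ 2 - (lam j : ℂ) ^ 2)
          = (1 / 2) * ∏ k : Fin (2 * m), (z - zs k)
            + (1 / 2) * ∏ k : Fin (2 * m), (z + zs k)) ∧
    (∀ (n : ℕ), N = 2 * n + 1 → ∀ (lr : ℝ), 0 < lr → l = (lr : ℂ) →
      ∀ (lam : Fin n → ℝ) (zs : Fin (2 * n + 1) → ℂ),
        Jc.charpoly = X * ∏ j : Fin n, ((X - C (lam j : ℂ)) * (X + C (lam j : ℂ))) →
        Ml.charpoly = ∏ k : Fin (2 * n + 1), (X - C (zs k)) →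
        ∀ z : ℂ, z * ∏ j : Fin n, (z ^ 2 - (lam j : ℂ) ^ 2)
          = (1 / 2) * ∏ k : Fin (2 * n + 1), (z - zs k)
            + (1 / 2) * ∏ k : Fin (2 * n + 1), (z + zs k)) := by
  haveI : NeZero N := ⟨by omega⟩
  -- main identity
  have hmain : ∀ z : ℂ,
      (z • (1 : Matrix (Fin N) (Fin N) ℂ) - Ml).det
        + (-1 : ℂ) ^ N * ((-z) • (1 : Matrix (Fin N) (Fin N) ℂ) - Ml).det
      = 2 * (z • (1 : Matrix (Fin N) (Fin N) ℂ) - Jc).det := by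
    intro z
    set A : Matrix (Fin N) (Fin N) ℂ := z • (1 : Matrix (Fin N) (Fin N) ℂ) - Jc with hA
    -- conjugation computation
    have hconj : signD N * ((-z) • (1 : Matrix (Fin N) (Fin N) ℂ) - Ml) * signD N
        = -(A + l • E11K N ℂ) := by
      have e2 : signD N * Jc * signD N = -Jc := by rw [hJc]; exact signD_conj_jacobi a
      have e3 : signD N * (l • E11K N ℂ) * signD N = l • E11K N ℂ := by
        rw [Matrix.mul_smul, Matrix.smul_mul, signD_conj_E11]
      have expand : signD N * ((-z) • (1 : Matrix (Fin N) (Fin N) ℂ) - Ml) * signD N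
          = signD N * ((-z) • (1 : Matrix (Fin N) (Fin N) ℂ)) * signD N
            - signD N * Jc * signD N - signD N * (l • E11K N ℂ) * signD N := by
        rw [hMl]
        simp only [Matrix.mul_sub, Matrix.sub_mul, Matrix.mul_add, Matrix.add_mul]
        abel
      rw [expand, signD_conj_smul_one, e2, e3, hA]
      rw [neg_smul]
      abel
    have hdet1 : ((-z) • (1 : Matrix (Fin N) (Fin N) ℂ) - Ml).det
        = (-1 : ℂ) ^ N * (A + l • E11K N ℂ).det := by
      rw [← det_signD_conj ((-z) • (1 : Matrix (Fin N) (Fin N) ℂ) - Ml), hconj,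
        Matrix.det_neg, Fintype.card_fin]
    have hsplit1 : (z • (1 : Matrix (Fin N) (Fin N) ℂ) - Ml)
        = A + (-l) • E11K N ℂ := by
      rw [hMl, hA, neg_smul]; abel
    have hpow : (-1 : ℂ) ^ N * (-1 : ℂ) ^ N = 1 := by rw [← mul_pow]; simp
    rw [hsplit1, hdet1, det_add_smul_E11, det_add_smul_E11]
    linear_combination
      (A.det + l * (A.updateRow 0 ((Pi.single (0 : Fin N) (1 : ℂ) : Fin N → ℂ))).det) * hpow
  refine ⟨hmain, ?_, ?_⟩
  · intro m hm lr hlr hl lam zs hJ hM z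
    subst hm
    have h1 : (∏ j : Fin m, (z ^ 2 - (lam j : ℂ) ^ 2))
        = Jc.charpoly.eval z := by
      rw [hJ]
      simp only [eval_prod, eval_mul, eval_sub, eval_add, eval_X, eval_C]
      exact Finset.prod_congr rfl fun j _ => by ring
    have h2 : Ml.charpoly.eval z = ∏ k : Fin (2 * m), (z - zs k) := by
      rw [hM]; simp [eval_prod]
    have h3 : Ml.charpoly.eval (-z) = ∏ k : Fin (2 * m), (-z - zs k) := by
      rw [hM]; simp [eval_prod]
    have h4 : (∏ k : Fin (2 * m), (-z - zs k))
        = (-1 : ℂ) ^ (2 * m) * ∏ k : Fin (2 * m), (z + zs k) := by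
      have e : (∏ k : Fin (2 * m), (-z - zs k))
          = ∏ k : Fin (2 * m), ((-1 : ℂ) * (z + zs k)) :=
        Finset.prod_congr rfl fun k _ => by ring
      rw [e, Finset.prod_mul_distrib, Finset.prod_const, Finset.card_univ, Fintype.card_fin]
    have := hmain z
    rw [← eval_charpoly_aux, ← eval_charpoly_aux, ← eval_charpoly_aux] at this
    rw [h2, h3, h4] at this
    rw [h1]
    have hp : ((-1 : ℂ) ^ (2 * m)) = 1 := by
      rw [pow_mul]; norm_num
    rw [hp] at this
    linear_combination (-(1/2) : ℂ) * this
  · intro n hn lr hlr hl lam zs hJ hM z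
    subst hn
    have h1 : z * (∏ j : Fin n, (z ^ 2 - (lam j : ℂ) ^ 2))
        = Jc.charpoly.eval z := by
      rw [hJ]
      simp only [eval_mul, eval_prod, eval_sub, eval_add, eval_X, eval_C]
      exact congrArg (z * ·) (Finset.prod_congr rfl fun j _ => by ring)
    have h2 : Ml.charpoly.eval z = ∏ k : Fin (2 * n + 1), (z - zs k) := by
      rw [hM]; simp [eval_prod]
    have h3 : Ml.charpoly.eval (-z) = ∏ k : Fin (2 * n + 1), (-z - zs k) := by
      rw [hM]; simp [eval_prod]
    have h4 : (∏ k : Fin (2 * n + 1), (-z - zs k))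
        = (-1 : ℂ) ^ (2 * n + 1) * ∏ k : Fin (2 * n + 1), (z + zs k) := by
      have e : (∏ k : Fin (2 * n + 1), (-z - zs k))
          = ∏ k : Fin (2 * n + 1), ((-1 : ℂ) * (z + zs k)) :=
        Finset.prod_congr rfl fun k _ => by ring
      rw [e, Finset.prod_mul_distrib, Finset.prod_const, Finset.card_univ, Fintype.card_fin]
    have := hmain z
    rw [← eval_charpoly_aux, ← eval_charpoly_aux, ← eval_charpoly_aux] at this
    rw [h2, h3, h4] at this
    rw [h1]
    have hp : ((-1 : ℂ) ^ (2 * n + 1)) = -1 := by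
      rw [pow_succ, pow_mul]; norm_num
    rw [hp] at this
    linear_combination (-(1/2) : ℂ) * this
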